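/- arXiv:0804.3817 — 5 statements merged into one kernel-verified Lean document; each statement's English description precedes it below -/
import Mathlib

section
/- Let f : {−1,1}^n → {−1,1} be a non-constant function and let s, t be positive integers with s·t ≥ deg(f). Let r_1, …, r_t ∈ (−1,1) be pairwise distinct. Then there exist an index i ∈ {1,…,t} and a set S ⊆ [n] with 1 ≤ |S| ≤ s such that the r_i-biased Fourier coefficient f̂(S, r_i) is nonzero. -/
open Finset

noncomputable section

/-- ±1 encoding of a Boolean. -/
def pmVal (b : Bool) : ℝ := if b then 1 else -1

/-- Probability weight of the point `x` of the cube under the product measure with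
bias vector `r` (coordinate `i` equals `1` with probability `(1 + r i)/2`). -/
def cubeWt {n : ℕ} (r : Fin n → ℝ) (x : Fin n → Bool) : ℝ :=
  ∏ i, (1 + r i * pmVal (x i)) / 2

/-- Expectation of `f : {-1,1}^n → ℝ` under the product measure with bias vector `r`. -/
def biasedExp {n : ℕ} (r : Fin n → ℝ) (f : (Fin n → Bool) → ℝ) : ℝ :=
  ∑ x : Fin n → Bool, cubeWt r x * f x

/-- The biased character `χ_S(x, r) = ∏_{i ∈ S} (x_i - r_i)/√(1 - r_i²)`. -/
def biasedChi {n : ℕ} (r : Fin n → ℝ) (S : Finset (Fin n)) (x : Fin n → Bool) : ℝ :=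
  ∏ i ∈ S, (pmVal (x i) - r i) / Real.sqrt (1 - (r i) ^ 2)

/-- Biased Fourier coefficient `f̂(S, r) = E_r[f · χ_S(·, r)]`. -/
def biasedFourier {n : ℕ} (r : Fin n → ℝ) (f : (Fin n → Bool) → ℝ) (S : Finset (Fin n)) : ℝ :=
  biasedExp r (fun x => f x * biasedChi r S x)

/-- Weight of the `s`-th Fourier level: `w_s(f, r) = Σ_{|S| = s} f̂(S, r)`. -/
def levelWeight {n : ℕ} (r : Fin n → ℝ) (f : (Fin n → Bool) → ℝ) (s : ℕ) : ℝ :=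
  ∑ S ∈ univ.filter (fun S : Finset (Fin n) => S.card = s), biasedFourier r f S

open Classical in
/-- Degree of `f`: the largest `|S|` with `f̂(S, 0) ≠ 0`. -/
def fourierDeg {n : ℕ} (f : (Fin n → Bool) → ℝ) : ℕ :=
  (univ.filter (fun S : Finset (Fin n) => biasedFourier (fun _ => (0 : ℝ)) f S ≠ 0)).sup
    Finset.card

/-! ### Auxiliary lemmas -/

lemma sum_fun_prod {n : ℕ} (g : Fin n → Bool → ℝ) :
    ∑ x : Fin n → Bool, ∏ i, g i (x i) = ∏ i, ∑ b : Bool, g i b := by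
  rw [← Fintype.piFinset_univ, Finset.sum_prod_piFinset]

lemma biasedExp_prod {n : ℕ} (r : Fin n → ℝ) (g : Fin n → Bool → ℝ) :
    biasedExp r (fun x => ∏ i, g i (x i))
      = ∏ i, ∑ b : Bool, (1 + r i * pmVal b) / 2 * g i b := by
  unfold biasedExp cubeWt
  rw [← sum_fun_prod]
  refine Finset.sum_congr rfl fun x _ => ?_
  rw [← Finset.prod_mul_distrib]

lemma biasedFourier_mono {n : ℕ} {ρ : ℝ} (hρ : ρ ∈ Set.Ioo (-1:ℝ) 1) (T S : Finset (Fin n)) :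
    biasedFourier (fun _ => ρ) (fun x => ∏ i ∈ T, pmVal (x i)) S
    = if S ⊆ T then (Real.sqrt (1 - ρ^2))^S.card * ρ^((T \ S).card) else 0 := by
  set σ := Real.sqrt (1 - ρ^2) with hσdef
  have h1 : (0:ℝ) < 1 - ρ^2 := by nlinarith [hρ.1, hρ.2]
  have hσpos : 0 < σ := Real.sqrt_pos.mpr h1
  have hσsq : σ^2 = 1 - ρ^2 := Real.sq_sqrt h1.le
  have key : biasedFourier (fun _ => ρ) (fun x => ∏ i ∈ T, pmVal (x i)) S
      = ∏ i, (if i ∈ S then (if i ∈ T then σ else 0) else (if i ∈ T then ρ else 1)) := by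
    unfold biasedFourier biasedChi
    have : ∀ x : Fin n → Bool, (∏ i ∈ T, pmVal (x i)) * ∏ i ∈ S, (pmVal (x i) - ρ) / σ
        = ∏ i, ((if i ∈ T then pmVal (x i) else 1) * (if i ∈ S then (pmVal (x i) - ρ)/σ else 1)) := by
      intro x
      rw [Finset.prod_mul_distrib, Finset.prod_ite_mem, Finset.prod_ite_mem,
        Finset.univ_inter, Finset.univ_inter]
    simp only [← hσdef, this]
    rw [biasedExp_prod (fun _ => ρ)
      (fun i b => (if i ∈ T then pmVal b else 1) * (if i ∈ S then (pmVal b - ρ)/σ else 1))]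
    refine Finset.prod_congr rfl fun i _ => ?_
    rw [Fintype.sum_bool]
    by_cases hiS : i ∈ S <;> by_cases hiT : i ∈ T <;>
      simp only [hiS, hiT, if_true, if_false, pmVal] <;> norm_num <;>
      field_simp <;> nlinarith [hσsq, hσpos]
  rw [key]
  by_cases hST : S ⊆ T
  · rw [if_pos hST]
    have : ∀ i : Fin n, (if i ∈ S then (if i ∈ T then σ else 0) else (if i ∈ T then ρ else 1))
        = (if i ∈ S then σ else 1) * (if i ∈ T \ S then ρ else 1) := by
      intro i
      by_cases hiS : i ∈ S
      · have hiT : i ∈ T := hST hiS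
        simp [hiS, hiT, Finset.mem_sdiff]
      · by_cases hiT : i ∈ T <;> simp [hiS, hiT, Finset.mem_sdiff]
    rw [Finset.prod_congr rfl fun i _ => this i, Finset.prod_mul_distrib,
      Finset.prod_ite_mem, Finset.prod_ite_mem, Finset.univ_inter, Finset.univ_inter,
      Finset.prod_const, Finset.prod_const]
  · rw [if_neg hST]
    obtain ⟨j, hjS, hjT⟩ := Finset.not_subset.mp hST
    exact Finset.prod_eq_zero (Finset.mem_univ j) (by simp [hjS, hjT])

lemma cubeWt_zero {n : ℕ} (x : Fin n → Bool) : cubeWt (fun _ => (0:ℝ)) x = (1/2)^n := by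
  unfold cubeWt; simp

lemma biasedChi_zero {n : ℕ} (S : Finset (Fin n)) (x : Fin n → Bool) :
    biasedChi (fun _ => (0:ℝ)) S x = ∏ i ∈ S, pmVal (x i) := by
  unfold biasedChi; simp

lemma biasedFourier_zero_eq {n : ℕ} (f : (Fin n → Bool) → ℝ) (T : Finset (Fin n)) :
    biasedFourier (fun _ => (0:ℝ)) f T
      = ∑ x : Fin n → Bool, (1/2)^n * (f x * ∏ i ∈ T, pmVal (x i)) := by
  unfold biasedFourier biasedExp
  refine Finset.sum_congr rfl fun x _ => ?_
  simp only [cubeWt_zero, biasedChi_zero]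

lemma pm_orth {n : ℕ} (x y : Fin n → Bool) :
    ∏ i : Fin n, (1 + pmVal (x i) * pmVal (y i)) = if x = y then (2:ℝ)^n else 0 := by
  by_cases h : x = y
  · subst h
    rw [if_pos rfl]
    have : ∀ i : Fin n, 1 + pmVal (x i) * pmVal (x i) = 2 := by
      intro i; cases x i <;> simp [pmVal] <;> norm_num
    rw [Finset.prod_congr rfl fun i _ => this i, Finset.prod_const]
    simp
  · rw [if_neg h]
    obtain ⟨j, hj⟩ : ∃ j, x j ≠ y j := by
      by_contra hc; push_neg at hc; exact h (funext hc)
    refine Finset.prod_eq_zero (Finset.mem_univ j) ?_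
    cases hx : x j <;> cases hy : y j <;> simp_all [pmVal]

lemma fourier_inversion {n : ℕ} (f : (Fin n → Bool) → ℝ) (y : Fin n → Bool) :
    ∑ T : Finset (Fin n), biasedFourier (fun _ => (0:ℝ)) f T * ∏ i ∈ T, pmVal (y i) = f y := by
  simp only [biasedFourier_zero_eq, Finset.sum_mul]
  rw [Finset.sum_comm]
  have step : ∀ x : Fin n → Bool,
      (∑ T : Finset (Fin n), (1/2)^n * (f x * ∏ i ∈ T, pmVal (x i)) * ∏ i ∈ T, pmVal (y i))
        = (1/2)^n * f x * (if x = y then (2:ℝ)^n else 0) := by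
    intro x
    rw [← pm_orth x y]
    have : ∀ i : Fin n, 1 + pmVal (x i) * pmVal (y i)
        = pmVal (x i) * pmVal (y i) + 1 := fun i => by ring
    rw [Finset.prod_congr rfl fun i _ => this i, Finset.prod_add]
    rw [Finset.powerset_univ, Finset.mul_sum]
    refine Finset.sum_congr rfl fun T _ => ?_
    rw [Finset.prod_const_one, mul_one, Finset.prod_mul_distrib]
    ring
  rw [Finset.sum_congr rfl fun x _ => step x]
  have : ∀ x : Fin n → Bool, (1/2)^n * f x * (if x = y then (2:ℝ)^n else 0)
      = if x = y then (1/2)^n * f x * (2:ℝ)^n else 0 := by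
    intro x; split <;> simp
  rw [Finset.sum_congr rfl fun x _ => this x,
    Finset.sum_ite_eq' Finset.univ y (fun x => (1/2)^n * f x * (2:ℝ)^n)]
  rw [if_pos (Finset.mem_univ y), mul_assoc, mul_comm, mul_assoc, ← mul_pow]
  norm_num

lemma biasedFourier_linear {n : ℕ} (r : Fin n → ℝ) (f : (Fin n → Bool) → ℝ)
    (S : Finset (Fin n)) :
    biasedFourier r f S
      = ∑ T : Finset (Fin n), biasedFourier (fun _ => (0:ℝ)) f T *
          biasedFourier r (fun x => ∏ i ∈ T, pmVal (x i)) S := by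
  have expand : ∀ T : Finset (Fin n), biasedFourier r (fun x => ∏ i ∈ T, pmVal (x i)) S
      = ∑ x : Fin n → Bool, cubeWt r x * ((∏ i ∈ T, pmVal (x i)) * biasedChi r S x) := fun T => rfl
  calc biasedFourier r f S
      = ∑ x : Fin n → Bool, cubeWt r x * (f x * biasedChi r S x) := rfl
    _ = ∑ x : Fin n → Bool, ∑ T : Finset (Fin n),
          biasedFourier (fun _ => (0:ℝ)) f T *
            (cubeWt r x * ((∏ i ∈ T, pmVal (x i)) * biasedChi r S x)) := by
        refine Finset.sum_congr rfl fun x _ => ?_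
        have hterm : ∀ T : Finset (Fin n),
            biasedFourier (fun _ => (0:ℝ)) f T *
              (cubeWt r x * ((∏ i ∈ T, pmVal (x i)) * biasedChi r S x))
            = (biasedFourier (fun _ => (0:ℝ)) f T * ∏ i ∈ T, pmVal (x i)) *
                (cubeWt r x * biasedChi r S x) := fun T => by ring
        rw [Finset.sum_congr rfl fun T _ => hterm T, ← Finset.sum_mul, fourier_inversion f x]
        ring
    _ = ∑ T : Finset (Fin n), ∑ x : Fin n → Bool,
          biasedFourier (fun _ => (0:ℝ)) f T *
            (cubeWt r x * ((∏ i ∈ T, pmVal (x i)) * biasedChi r S x)) := Finset.sum_comm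
    _ = ∑ T : Finset (Fin n), biasedFourier (fun _ => (0:ℝ)) f T *
          biasedFourier r (fun x => ∏ i ∈ T, pmVal (x i)) S := by
        refine Finset.sum_congr rfl fun T _ => ?_
        rw [expand T, Finset.mul_sum]

lemma level_sum {n : ℕ} (f : (Fin n → Bool) → ℝ) {ρ : ℝ} (hρ : ρ ∈ Set.Ioo (-1:ℝ) 1) (k : ℕ) :
    ∑ S ∈ Finset.powersetCard k (univ : Finset (Fin n)), biasedFourier (fun _ => ρ) f S
      = (Real.sqrt (1-ρ^2))^k *
        ∑ T : Finset (Fin n), biasedFourier (fun _ => (0:ℝ)) f T * (T.card.choose k) *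
          ρ^(T.card - k) := by
  have hrw : ∀ S ∈ Finset.powersetCard k (univ : Finset (Fin n)),
      biasedFourier (fun _ => ρ) f S
        = ∑ T : Finset (Fin n), biasedFourier (fun _ => (0:ℝ)) f T *
            (if S ∈ Finset.powersetCard k T then (Real.sqrt (1-ρ^2))^k * ρ^(T.card - k) else 0) := by
    intro S hS
    rw [Finset.mem_powersetCard_univ] at hS
    rw [biasedFourier_linear]
    refine Finset.sum_congr rfl fun T _ => ?_
    rw [biasedFourier_mono hρ]
    congr 1
    by_cases h : S ⊆ T
    · rw [if_pos h, if_pos (Finset.mem_powersetCard.mpr ⟨h, hS⟩), hS, Finset.card_sdiff_of_subset h, hS]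
    · rw [if_neg h, if_neg (fun hc => h (Finset.mem_powersetCard.mp hc).1)]
  rw [Finset.sum_congr rfl hrw, Finset.sum_comm, Finset.mul_sum]
  refine Finset.sum_congr rfl fun T _ => ?_
  rw [← Finset.mul_sum]
  have hsub : Finset.powersetCard k T ⊆ Finset.powersetCard k (univ : Finset (Fin n)) :=
    Finset.powersetCard_mono (Finset.subset_univ T)
  rw [Finset.sum_ite_mem, Finset.inter_eq_right.mpr hsub, Finset.sum_const,
    Finset.card_powersetCard, nsmul_eq_mul]
  ring


open Polynomial in
theorem stmt0 {n : ℕ} (f : (Fin n → Bool) → ℝ)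
    (hpm : ∀ x, f x = 1 ∨ f x = -1)
    (hnc : ∃ x y, f x ≠ f y)
    (s t : ℕ) (hs : 0 < s) (ht : 0 < t) (hst : fourierDeg f ≤ s * t)
    (r : Fin t → ℝ) (hr : ∀ i, r i ∈ Set.Ioo (-1 : ℝ) 1)
    (hinj : Function.Injective r) :
    ∃ (i : Fin t) (S : Finset (Fin n)), 1 ≤ S.card ∧ S.card ≤ s ∧
      biasedFourier (fun _ => r i) f S ≠ 0 := by
  by_contra hcon
  push_neg at hcon
  set c : Finset (Fin n) → ℝ := fun T => biasedFourier (fun _ => (0:ℝ)) f T with hc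
  set Q : ℝ[X] := ∑ T : Finset (Fin n), C (c T) * X ^ T.card with hQ
  -- evaluation of iterated derivatives of Q
  have heval : ∀ (k : ℕ) (ρ : ℝ), (derivative^[k] Q).eval ρ
      = ∑ T : Finset (Fin n), c T * (T.card.descFactorial k) * ρ^(T.card - k) := by
    intro k ρ
    rw [hQ, iterate_derivative_sum, eval_finset_sum]
    refine Finset.sum_congr rfl fun T _ => ?_
    rw [iterate_derivative_C_mul, iterate_derivative_X_pow_eq_natCast_mul]
    simp [mul_assoc]
  -- vanishing of derivatives at the r i
  have hker : ∀ (i : Fin t) (k : ℕ), 1 ≤ k → k ≤ s → (derivative^[k] Q).eval (r i) = 0 := by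
    intro i k hk1 hk2
    have h1 : (0:ℝ) < 1 - (r i)^2 := by nlinarith [(hr i).1, (hr i).2]
    have hσ : Real.sqrt (1 - (r i)^2) ≠ 0 := ne_of_gt (Real.sqrt_pos.mpr h1)
    have hzero : ∑ S ∈ Finset.powersetCard k (univ : Finset (Fin n)),
        biasedFourier (fun _ => r i) f S = 0 := by
      refine Finset.sum_eq_zero fun S hS => ?_
      rw [Finset.mem_powersetCard_univ] at hS
      exact hcon i S (by omega) (by omega)
    rw [level_sum f (hr i) k] at hzero
    have hsum : ∑ T : Finset (Fin n), c T * (T.card.choose k) * (r i)^(T.card - k) = 0 := by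
      rcases mul_eq_zero.mp hzero with h | h
      · exact absurd h (pow_ne_zero _ hσ)
      · exact h
    rw [heval]
    calc ∑ T : Finset (Fin n), c T * (T.card.descFactorial k) * (r i)^(T.card - k)
        = (k.factorial : ℝ) * ∑ T : Finset (Fin n), c T * (T.card.choose k) * (r i)^(T.card - k) := by
          rw [Finset.mul_sum]
          refine Finset.sum_congr rfl fun T _ => ?_
          rw [Nat.descFactorial_eq_factorial_mul_choose]
          push_cast
          ring
      _ = 0 := by rw [hsum, mul_zero]
  -- the derivative of Q vanishes
  have hQ' : derivative Q = 0 := by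
    by_contra hne
    have hroot : ∀ i : Fin t, ∀ m ≤ s - 1, (derivative^[m] (derivative Q)).IsRoot (r i) := by
      intro i m hm
      have hiter : derivative^[m] (derivative Q) = derivative^[m+1] Q :=
        (Function.iterate_succ_apply derivative m Q).symm
      rw [hiter]
      exact hker i (m+1) (by omega) (by omega)
    have hdvd : ∀ i : Fin t, (X - C (r i))^s ∣ derivative Q := by
      intro i
      have hlt : s - 1 < (derivative Q).rootMultiplicity (r i) :=
        Polynomial.lt_rootMultiplicity_of_isRoot_iterate_derivative hne (hroot i)
      exact dvd_trans (pow_dvd_pow _ (by omega)) (pow_rootMultiplicity_dvd _ _)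
    have hpair : Pairwise (Function.onFun IsCoprime fun i : Fin t => (X - C (r i))^s) :=
      fun i j hij => ((Polynomial.pairwise_coprime_X_sub_C hinj) hij).pow
    have hdvd2 : (∏ i : Fin t, (X - C (r i))^s) ∣ derivative Q :=
      Fintype.prod_dvd_of_coprime hpair hdvd
    have hdeg1 : (∏ i : Fin t, (X - C (r i))^s).natDegree ≤ (derivative Q).natDegree :=
      Polynomial.natDegree_le_of_dvd hdvd2 hne
    have hdegprod : (∏ i : Fin t, (X - C (r i))^s).natDegree = t * s := by
      rw [Polynomial.natDegree_prod_of_monic _ _ (fun i _ => (monic_X_sub_C (r i)).pow s)]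
      simp [Polynomial.natDegree_pow]
    have hQdeg : Q.natDegree ≤ s * t := by
      rw [hQ]
      refine Polynomial.natDegree_sum_le_of_forall_le _ _ fun T _ => ?_
      by_cases hT : c T = 0
      · simp [hT]
      · refine le_trans (Polynomial.natDegree_C_mul_X_pow_le _ _) (le_trans ?_ hst)
        classical
        exact Finset.le_sup (f := Finset.card)
          (Finset.mem_filter.mpr ⟨Finset.mem_univ T, hT⟩)
    have hQne : Q.natDegree ≠ 0 := by
      intro h0
      rw [Polynomial.eq_C_of_natDegree_eq_zero h0] at hne
      exact hne (derivative_C)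
    have hlt2 : (derivative Q).natDegree < Q.natDegree := Polynomial.natDegree_derivative_lt hQne
    rw [hdegprod] at hdeg1
    have hfin : t * s < s * t := lt_of_le_of_lt hdeg1 (lt_of_lt_of_le hlt2 hQdeg)
    rw [mul_comm] at hfin
    exact lt_irrefl _ hfin
  -- Q is constant
  have hdeg0 : Q.natDegree = 0 := Polynomial.natDegree_eq_zero_of_derivative_eq_zero hQ'
  have heq : Q.eval 1 = Q.eval 0 := by
    rw [Polynomial.eq_C_of_natDegree_eq_zero hdeg0]; simp
  have heval1 : Q.eval 1 = f (fun _ => true) := by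
    rw [hQ, eval_finset_sum]
    have hinv := fourier_inversion f (fun _ => true)
    simp only [eval_mul, eval_C, eval_pow, eval_X, one_pow, mul_one]
    simpa [pmVal] using hinv
  have heval0 : Q.eval 0 = c ∅ := by
    rw [hQ, eval_finset_sum, Finset.sum_eq_single (∅ : Finset (Fin n))]
    · simp
    · intro T _ hT
      have hcard : T.card ≠ 0 := by simpa [Finset.card_eq_zero] using hT
      simp [zero_pow hcard]
    · simp
  have hc0 : c ∅ = (1/2)^n * ∑ x : Fin n → Bool, f x := by
    rw [hc]
    simp only []
    rw [biasedFourier_zero_eq]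
    simp [Finset.mul_sum]
  obtain ⟨a, b, hab⟩ := hnc
  set u : Fin n → Bool := fun _ => true with hu
  obtain ⟨y₀, hy₀⟩ : ∃ y₀, f y₀ ≠ f u := by
    by_cases h : f a = f u
    · exact ⟨b, fun hb => hab (h.trans hb.symm)⟩
    · exact ⟨a, h⟩
  have hfu : f u = (1/2)^n * ∑ x : Fin n → Bool, f x := by
    rw [← heval1, heq, heval0, hc0]
  have hcardfun : (Finset.univ : Finset (Fin n → Bool)).card = 2^n := by
    rw [Finset.card_univ]
    simp
  have hhalf : (0:ℝ) < (1/2)^n := by positivity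
  have hprod : ((1:ℝ)/2)^n * (2:ℝ)^n = 1 := by
    rw [← mul_pow]; norm_num
  rcases hpm u with h1 | h1
  · have hy : f y₀ = -1 := (hpm y₀).resolve_left (by rw [h1] at hy₀; exact hy₀)
    have hlt : ∑ x : Fin n → Bool, f x < ∑ x : Fin n → Bool, (1:ℝ) :=
      Finset.sum_lt_sum (fun x _ => by rcases hpm x with h|h <;> rw [h] <;> norm_num)
        ⟨y₀, Finset.mem_univ _, by rw [hy]; norm_num⟩
    rw [Finset.sum_const, hcardfun, nsmul_eq_mul] at hlt
    push_cast at hlt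
    have hmul := mul_lt_mul_of_pos_left hlt hhalf
    rw [h1] at hfu
    nlinarith [hprod]
  · have hy : f y₀ = 1 := (hpm y₀).resolve_right (by rw [h1] at hy₀; exact hy₀)
    have hlt : ∑ x : Fin n → Bool, (-1:ℝ) < ∑ x : Fin n → Bool, f x :=
      Finset.sum_lt_sum (fun x _ => by rcases hpm x with h|h <;> rw [h] <;> norm_num)
        ⟨y₀, Finset.mem_univ _, by rw [hy]; norm_num⟩
    rw [Finset.sum_const, hcardfun, nsmul_eq_mul] at hlt
    push_cast at hlt
    have hmul := mul_lt_mul_of_pos_left hlt hhalf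
    rw [h1] at hfu
    nlinarith [hprod]
end
end

section
/- Let f : {−1,1}^n → ℝ, let s ∈ {1,…,n}, and let r_* ∈ (−1,1). The map r ↦ E_r[f] on (−1,1) extends to a polynomial in r, and its s-th derivative at r = r_* equals s!·(1−r_*²)^{−s/2}·w_s(f, r_*). -/
open Finset

noncomputable section

/-! ### Auxiliary lemmas -/

lemma aux_sigma_pos {r : ℝ} (hr : r ∈ Set.Ioo (-1 : ℝ) 1) : 0 < Real.sqrt (1 - r ^ 2) := by
  apply Real.sqrt_pos.2; nlinarith [hr.1, hr.2]

lemma aux_sigma_sq {r : ℝ} (hr : r ∈ Set.Ioo (-1 : ℝ) 1) :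
    Real.sqrt (1 - r ^ 2) * Real.sqrt (1 - r ^ 2) = 1 - r ^ 2 := by
  apply Real.mul_self_sqrt; nlinarith [hr.1, hr.2]

lemma aux_mono_deriv (C a : ℝ) (k : ℕ) : ∀ m : ℕ,
    iteratedDeriv m (fun r : ℝ => C * (r - a) ^ k)
      = fun r => C * ((k.descFactorial m : ℝ) * (r - a) ^ (k - m)) := by
  intro m
  induction m with
  | zero => simp
  | succ m ih =>
    rw [iteratedDeriv_succ, ih]
    funext r
    have h : HasDerivAt (fun r : ℝ => (r - a) ^ (k - m))
        ((k - m : ℕ) * (r - a) ^ (k - m - 1)) r := by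
      simpa [Pi.pow_def] using ((hasDerivAt_id r).sub_const a).pow (k - m)
    have h2 : HasDerivAt (fun r : ℝ => C * ((k.descFactorial m : ℝ) * (r - a) ^ (k - m)))
        (C * (k.descFactorial m : ℝ) * ((k - m : ℕ) * (r - a) ^ (k - m - 1))) r := by
      simpa [mul_assoc] using (h.const_mul ((k.descFactorial m : ℝ))).const_mul C
    rw [h2.deriv, Nat.descFactorial_succ]
    rw [Nat.sub_sub]
    push_cast
    ring

lemma aux_iterDeriv_finset_sum {ι : Type*} (T : Finset ι) (g : ι → ℝ → ℝ)
    (hg : ∀ i, ContDiff ℝ ⊤ (g i)) (m : ℕ) (x : ℝ) :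
    iteratedDeriv m (fun r => ∑ i ∈ T, g i r) x = ∑ i ∈ T, iteratedDeriv m (g i) x := by
  classical
  induction T using Finset.cons_induction with
  | empty =>
    simp only [Finset.sum_empty]
    rw [iteratedDeriv_eq_iterate, Function.iterate_fixed (by simp [deriv_const'])]
  | cons a T ha ih =>
    simp only [Finset.sum_cons]
    rw [← ih]
    simp_rw [← iteratedDerivWithin_univ]
    exact iteratedDerivWithin_add (Set.mem_univ x) uniqueDiffOn_univ
      ((hg a).of_le le_top).contDiffWithinAt
      ((ContDiff.sum (fun i _ => hg i)).of_le le_top).contDiffWithinAt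

lemma aux_coordKey {r : ℝ} (hr : r ∈ Set.Ioo (-1 : ℝ) 1) (b c : Bool) :
    (1 + r * pmVal b) / 2 *
      (1 + (pmVal b - r) / Real.sqrt (1 - r ^ 2) * ((pmVal c - r) / Real.sqrt (1 - r ^ 2)))
      = if b = c then 1 else 0 := by
  have h1 := aux_sigma_sq hr
  have h2 : (1 : ℝ) - r ^ 2 ≠ 0 := by nlinarith [hr.1, hr.2]
  have h3 : Real.sqrt (1 - r ^ 2) ≠ 0 := (aux_sigma_pos hr).ne'
  cases b <;> cases c <;> simp only [pmVal, if_true, if_false, Bool.false_eq_true,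
    Bool.true_eq_false, reduceIte] <;> rw [div_mul_div_comm, h1] <;> field_simp <;> ring

/-- Fourier inversion at bias r. -/
lemma aux_inversion {n : ℕ} {r : ℝ} (hr : r ∈ Set.Ioo (-1 : ℝ) 1) (f : (Fin n → Bool) → ℝ)
    (x : Fin n → Bool) :
    f x = ∑ S : Finset (Fin n),
      biasedFourier (fun _ => r) f S * biasedChi (fun _ => r) S x := by
  classical
  set σ := Real.sqrt (1 - r ^ 2) with hσ
  have key : ∀ y : Fin n → Bool,
      cubeWt (fun _ => r) y * ∑ S : Finset (Fin n),
        biasedChi (fun _ => r) S y * biasedChi (fun _ => r) S x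
      = if y = x then 1 else 0 := by
    intro y
    have hsum : ∑ S : Finset (Fin n),
        biasedChi (fun _ => r) S y * biasedChi (fun _ => r) S x
        = ∏ i, (1 + (pmVal (y i) - r) / σ * ((pmVal (x i) - r) / σ)) := by
      have hp := Fintype.prod_add (fun i => (pmVal (y i) - r) / σ * ((pmVal (x i) - r) / σ))
        (fun _ => (1:ℝ))
      simp only [prod_const_one, mul_one] at hp
      calc ∑ S : Finset (Fin n), biasedChi (fun _ => r) S y * biasedChi (fun _ => r) S x
          = ∑ S : Finset (Fin n), ∏ i ∈ S,
              ((pmVal (y i) - r) / σ * ((pmVal (x i) - r) / σ)) := by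
            refine Finset.sum_congr rfl fun S _ => ?_
            rw [biasedChi, biasedChi, ← prod_mul_distrib]
        _ = ∏ i, ((pmVal (y i) - r) / σ * ((pmVal (x i) - r) / σ) + 1) := hp.symm
        _ = _ := by refine Finset.prod_congr rfl fun i _ => ?_; ring
    rw [hsum, cubeWt, ← prod_mul_distrib]
    by_cases hyx : y = x
    · subst hyx
      rw [if_pos rfl]
      apply Finset.prod_eq_one
      intro i _
      have := aux_coordKey hr (y i) (y i)
      simpa using this
    · rw [if_neg hyx]
      obtain ⟨i, hi⟩ : ∃ i, y i ≠ x i := by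
        by_contra h
        push_neg at h
        exact hyx (funext h)
      apply Finset.prod_eq_zero (Finset.mem_univ i)
      have := aux_coordKey hr (y i) (x i)
      rw [if_neg hi] at this
      exact this
  calc f x = ∑ y : Fin n → Bool, (if y = x then 1 else 0) * f y := by
        simp
    _ = ∑ y : Fin n → Bool, (cubeWt (fun _ => r) y *
          ∑ S : Finset (Fin n), biasedChi (fun _ => r) S y * biasedChi (fun _ => r) S x) * f y := by
        refine Finset.sum_congr rfl fun y _ => ?_
        rw [key y]
    _ = _ := by
        simp only [biasedFourier, biasedExp, Finset.sum_mul, Finset.mul_sum]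
        rw [Finset.sum_comm]
        refine Finset.sum_congr rfl fun S _ => Finset.sum_congr rfl fun y _ => ?_
        ring

/-- Expectation of a single character under bias `t`. -/
lemma aux_chi_exp {n : ℕ} {r : ℝ} (hr : r ∈ Set.Ioo (-1 : ℝ) 1) (t : ℝ) (S : Finset (Fin n)) :
    ∑ x : Fin n → Bool, cubeWt (fun _ => t) x * biasedChi (fun _ => r) S x
      = ((t - r) / Real.sqrt (1 - r ^ 2)) ^ S.card := by
  classical
  have hσ0 : Real.sqrt (1 - r ^ 2) ≠ 0 := (aux_sigma_pos hr).ne'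
  set g : Fin n → Bool → ℝ := fun i b =>
    (1 + t * pmVal b) / 2 * (if i ∈ S then (pmVal b - r) / Real.sqrt (1 - r ^ 2) else 1)
    with hg
  have hterm : ∀ x : Fin n → Bool, cubeWt (fun _ => t) x * biasedChi (fun _ => r) S x
      = ∏ i, g i (x i) := by
    intro x
    rw [cubeWt, biasedChi]
    simp only [hg]
    rw [prod_mul_distrib, Finset.prod_ite_mem, univ_inter]
  simp only [hterm]
  rw [← Fintype.prod_sum g]
  have hcoord : ∀ i : Fin n,
      (∑ b : Bool, g i b) = if i ∈ S then (t - r) / Real.sqrt (1 - r ^ 2) else 1 := by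
    intro i
    by_cases hi : i ∈ S <;> simp only [hg, hi, if_true, if_false, Fintype.sum_bool, pmVal] <;>
      norm_num <;> field_simp <;> ring
  rw [Finset.prod_congr rfl fun i _ => hcoord i]
  rw [Finset.prod_ite_mem univ S (fun _ => (t - r) / Real.sqrt (1 - r ^ 2)), univ_inter,
    prod_const]

/-- Polynomial expansion of the biased expectation around `rstar`, grouped by level. -/
lemma aux_expansion {n : ℕ} {rstar : ℝ} (hr : rstar ∈ Set.Ioo (-1 : ℝ) 1)
    (f : (Fin n → Bool) → ℝ) (t : ℝ) :
    biasedExp (fun _ : Fin n => t) f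
      = ∑ k ∈ Finset.range (n + 1),
          (levelWeight (fun _ => rstar) f k / (Real.sqrt (1 - rstar ^ 2)) ^ k)
            * (t - rstar) ^ k := by
  classical
  set σ := Real.sqrt (1 - rstar ^ 2) with hσ
  have hσ0 : σ ≠ 0 := (aux_sigma_pos hr).ne'
  have h1 : biasedExp (fun _ : Fin n => t) f
      = ∑ S : Finset (Fin n),
          biasedFourier (fun _ => rstar) f S * ((t - rstar) / σ) ^ S.card := by
    rw [biasedExp]
    calc ∑ x : Fin n → Bool, cubeWt (fun _ => t) x * f x
        = ∑ x : Fin n → Bool, cubeWt (fun _ => t) x *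
            ∑ S : Finset (Fin n),
              biasedFourier (fun _ => rstar) f S * biasedChi (fun _ => rstar) S x := by
          refine Finset.sum_congr rfl fun x _ => ?_
          rw [← aux_inversion hr f x]
      _ = ∑ S : Finset (Fin n), biasedFourier (fun _ => rstar) f S *
            ∑ x : Fin n → Bool, cubeWt (fun _ => t) x * biasedChi (fun _ => rstar) S x := by
          simp only [Finset.mul_sum]
          rw [Finset.sum_comm]
          refine Finset.sum_congr rfl fun S _ => Finset.sum_congr rfl fun x _ => ?_
          ring
      _ = _ := by
          refine Finset.sum_congr rfl fun S _ => ?_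
          rw [aux_chi_exp hr t S]
  rw [h1]
  have hmaps : ∀ S : Finset (Fin n), S ∈ (univ : Finset (Finset (Fin n))) →
      S.card ∈ Finset.range (n + 1) := by
    intro S _
    rw [Finset.mem_range, Nat.lt_succ_iff]
    simpa using Finset.card_le_univ S
  rw [← Finset.sum_fiberwise_of_maps_to hmaps
    (fun S => biasedFourier (fun _ => rstar) f S * ((t - rstar) / σ) ^ S.card)]
  refine Finset.sum_congr rfl fun k _ => ?_
  calc ∑ S ∈ univ.filter (fun S : Finset (Fin n) => S.card = k),
        biasedFourier (fun _ => rstar) f S * ((t - rstar) / σ) ^ S.card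
      = ∑ S ∈ univ.filter (fun S : Finset (Fin n) => S.card = k),
        biasedFourier (fun _ => rstar) f S * ((t - rstar) / σ) ^ k := by
        refine Finset.sum_congr rfl fun S hS => ?_
        rw [(Finset.mem_filter.1 hS).2]
    _ = levelWeight (fun _ => rstar) f k * ((t - rstar) / σ) ^ k := by
        rw [levelWeight, Finset.sum_mul]
    _ = _ := by rw [div_pow]; ring

/-- generalized Russo formula, equal biases. For `f : {-1,1}^n → ℝ`,
`1 ≤ s ≤ n`, and `r_* ∈ (-1,1)`, the `s`-th derivative of `r ↦ E_r[f]` at `r_*` equals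
`s! · (1 - r_*²)^{-s/2} · w_s(f, r_*)`. -/
theorem stmt1 {n : ℕ} (f : (Fin n → Bool) → ℝ) (s : ℕ) (hs : 1 ≤ s) (hsn : s ≤ n)
    (rstar : ℝ) (hr : rstar ∈ Set.Ioo (-1 : ℝ) 1) :
    iteratedDeriv s (fun r : ℝ => biasedExp (fun _ : Fin n => r) f) rstar
      = (s.factorial : ℝ) / (Real.sqrt (1 - rstar ^ 2)) ^ s
          * levelWeight (fun _ => rstar) f s := by
  classical
  set σ := Real.sqrt (1 - rstar ^ 2) with hσ
  set w : ℕ → ℝ := fun k => levelWeight (fun _ => rstar) f k / σ ^ k with hw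
  have hfun : (fun r : ℝ => biasedExp (fun _ : Fin n => r) f)
      = fun r : ℝ => ∑ k ∈ Finset.range (n + 1), w k * (r - rstar) ^ k := by
    funext t
    exact aux_expansion hr f t
  rw [hfun]
  rw [aux_iterDeriv_finset_sum (Finset.range (n + 1))
    (fun k => fun r : ℝ => w k * (r - rstar) ^ k)
    (fun k => (contDiff_const.mul ((contDiff_id.sub contDiff_const).pow k))) s rstar]
  have heval : ∀ k : ℕ,
      iteratedDeriv s (fun r : ℝ => w k * (r - rstar) ^ k) rstar
        = w k * ((k.descFactorial s : ℝ) * (0 : ℝ) ^ (k - s)) := by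
    intro k
    rw [aux_mono_deriv (w k) rstar k s]
    simp
  rw [Finset.sum_congr rfl fun k _ => heval k]
  rw [Finset.sum_eq_single s]
  · rw [Nat.sub_self, pow_zero, Nat.descFactorial_self]
    rw [hw]
    ring
  · intro k _ hk
    rcases lt_or_gt_of_ne hk with h | h
    · rw [Nat.descFactorial_eq_zero_iff_lt.2 h]
      simp
    · rw [zero_pow (Nat.sub_ne_zero_of_lt h)]
      simp
  · intro hsmem
    exact absurd (Finset.mem_range.2 (Nat.lt_succ_of_le hsn)) hsmem

end
end

section
/- For every f : {−1,1}^n → ℝ, every r ∈ (−1,1), and every s ∈ {1,…,n}: w_s(f,r) = (1−r²)^{s/2} · Σ_{t=s}^{n} C(t,s) · w_t(f,0) · r^{t−s}, where C(t,s) is the binomial coefficient. -/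
open Finset

noncomputable section

lemma sum_prod_bool {n : ℕ} (h : Fin n → Bool → ℝ) :
    ∑ x : Fin n → Bool, ∏ i, h i (x i) = ∏ i, (h i true + h i false) := by
  rw [← Fintype.piFinset_univ, ← Finset.prod_univ_sum]
  congr 1; ext i; simp [add_comm]

lemma sum_powerset_prod {n : ℕ} (a : Fin n → ℝ) :
    ∑ T : Finset (Fin n), ∏ i ∈ T, a i = ∏ i, (a i + 1) := by
  rw [Finset.prod_add]; simp [Finset.powerset_univ]

lemma chi_zero {n : ℕ} (T : Finset (Fin n)) (x : Fin n → Bool) :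
    biasedChi (fun _ => (0:ℝ)) T x = ∏ i ∈ T, pmVal (x i) := by
  unfold biasedChi; simp

lemma pm_mul_pm_add_one (b b' : Bool) :
    pmVal b * pmVal b' + 1 = if b = b' then 2 else 0 := by
  cases b <;> cases b' <;> norm_num [pmVal]

lemma fourier_expansion {n : ℕ} (f : (Fin n → Bool) → ℝ) (x : Fin n → Bool) :
    f x = ∑ T : Finset (Fin n),
      biasedFourier (fun _ => (0:ℝ)) f T * ∏ i ∈ T, pmVal (x i) := by
  have key : ∀ y : Fin n → Bool,
      ∏ i, (pmVal (y i) * pmVal (x i) + 1) = if y = x then (2:ℝ)^n else 0 := by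
    intro y
    by_cases hxy : y = x
    · subst hxy
      simp only [pm_mul_pm_add_one, if_pos rfl, if_true]
      simp
    · rw [if_neg hxy]
      obtain ⟨i, hi⟩ : ∃ i, y i ≠ x i := by
        by_contra h; push_neg at h; exact hxy (funext h)
      exact Finset.prod_eq_zero (Finset.mem_univ i) (by rw [pm_mul_pm_add_one, if_neg hi])
  calc f x = ∑ y : Fin n → Bool, (1/2:ℝ)^n * f y * (if y = x then (2:ℝ)^n else 0) := by
        simp only [mul_ite, mul_zero]
        rw [Finset.sum_ite_eq' Finset.univ x]
        have h2 : (1/2:ℝ)^n * (2:ℝ)^n = 1 := by rw [← mul_pow]; norm_num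
        simp only [Finset.mem_univ, if_true]
        linear_combination (-f x) * h2
    _ = ∑ y : Fin n → Bool, (1/2:ℝ)^n * f y * ∏ i, (pmVal (y i) * pmVal (x i) + 1) := by
        simp_rw [key]
    _ = ∑ y : Fin n → Bool, (1/2:ℝ)^n * f y *
          ∑ T : Finset (Fin n), ∏ i ∈ T, (pmVal (y i) * pmVal (x i)) := by
        simp_rw [sum_powerset_prod]
    _ = ∑ T : Finset (Fin n), ∑ y : Fin n → Bool,
          (1/2:ℝ)^n * f y * ∏ i ∈ T, (pmVal (y i) * pmVal (x i)) := by
        rw [Finset.sum_comm]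
        simp_rw [Finset.mul_sum]
    _ = _ := by
        refine Finset.sum_congr rfl fun T _ => ?_
        unfold biasedFourier biasedExp
        rw [Finset.sum_mul]
        refine Finset.sum_congr rfl fun y _ => ?_
        simp only [cubeWt_zero, chi_zero, Finset.prod_mul_distrib]
        ring

lemma coord_sum (r σ : ℝ) (hσ : σ ^ 2 = 1 - r ^ 2) (hσ0 : σ ≠ 0)
    (cS cT : Prop) [Decidable cS] [Decidable cT] :
    (1 + r * pmVal true) / 2 * ((if cT then pmVal true else 1) *
        (if cS then (pmVal true - r) / σ else 1))
      + (1 + r * pmVal false) / 2 * ((if cT then pmVal false else 1) *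
        (if cS then (pmVal false - r) / σ else 1))
    = if cS then (if cT then σ else 0) else (if cT then r else 1) := by
  simp only [pmVal, if_true, if_false, Bool.false_eq_true]
  by_cases hS : cS <;> by_cases hT : cT <;>
    simp only [hS, hT, if_true, if_false, if_pos, if_neg, not_false_iff] <;>
    field_simp <;> ring_nf <;> nlinarith [hσ]

lemma biasedFourier_eq {n : ℕ} (f : (Fin n → Bool) → ℝ) (r : ℝ)
    (hr : r ∈ Set.Ioo (-1 : ℝ) 1) (S : Finset (Fin n)) :
    biasedFourier (fun _ => r) f S
      = ∑ T : Finset (Fin n), biasedFourier (fun _ => (0:ℝ)) f T *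
          (if S ⊆ T then (Real.sqrt (1 - r ^ 2)) ^ S.card * r ^ (T.card - S.card) else 0) := by
  set σ := Real.sqrt (1 - r ^ 2) with hσdef
  have h1r : (0:ℝ) < 1 - r ^ 2 := by nlinarith [hr.1, hr.2]
  have hσpos : 0 < σ := Real.sqrt_pos.mpr h1r
  have hσsq : σ ^ 2 = 1 - r ^ 2 := Real.sq_sqrt h1r.le
  unfold biasedFourier biasedExp
  calc ∑ x : Fin n → Bool, cubeWt (fun _ => r) x * (f x * biasedChi (fun _ => r) S x)
      = ∑ x : Fin n → Bool, ∑ T : Finset (Fin n),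
          biasedFourier (fun _ => (0:ℝ)) f T *
            (cubeWt (fun _ => r) x * ((∏ i ∈ T, pmVal (x i)) * biasedChi (fun _ => r) S x)) := by
        refine Finset.sum_congr rfl fun x _ => ?_
        rw [fourier_expansion f x, Finset.sum_mul, Finset.mul_sum]
        refine Finset.sum_congr rfl fun T _ => by ring
    _ = ∑ T : Finset (Fin n), biasedFourier (fun _ => (0:ℝ)) f T *
          ∑ x : Fin n → Bool,
            cubeWt (fun _ => r) x * ((∏ i ∈ T, pmVal (x i)) * biasedChi (fun _ => r) S x) := by
        rw [Finset.sum_comm]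
        exact Finset.sum_congr rfl fun T _ => (Finset.mul_sum _ _ _).symm
    _ = _ := by
        refine Finset.sum_congr rfl fun T _ => ?_
        congr 1
        have hrw : ∀ x : Fin n → Bool,
            cubeWt (fun _ => r) x * ((∏ i ∈ T, pmVal (x i)) * biasedChi (fun _ => r) S x)
            = ∏ i, ((1 + r * pmVal (x i)) / 2 *
                ((if i ∈ T then pmVal (x i) else 1) *
                 (if i ∈ S then (pmVal (x i) - r) / σ else 1))) := by
          intro x
          unfold cubeWt biasedChi
          rw [Finset.prod_mul_distrib, Finset.prod_mul_distrib,
              ← Finset.prod_filter, ← Finset.prod_filter,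
              Finset.filter_univ_mem, Finset.filter_univ_mem]
        simp_rw [hrw]
        rw [sum_prod_bool (fun i b => (1 + r * pmVal b) / 2 *
              ((if i ∈ T then pmVal b else 1) * (if i ∈ S then (pmVal b - r) / σ else 1)))]
        have hfac : ∀ i : Fin n,
            ((1 + r * pmVal true) / 2 *
                ((if i ∈ T then pmVal true else 1) *
                 (if i ∈ S then (pmVal true - r) / σ else 1)))
            + ((1 + r * pmVal false) / 2 *
                ((if i ∈ T then pmVal false else 1) *
                 (if i ∈ S then (pmVal false - r) / σ else 1)))
            = if i ∈ S then (if i ∈ T then σ else 0) else (if i ∈ T then r else 1) :=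
          fun i => coord_sum r σ hσsq hσpos.ne' _ _
        rw [Finset.prod_congr rfl fun i _ => hfac i]
        rw [← Finset.prod_mul_prod_compl S]
        by_cases hST : S ⊆ T
        · rw [if_pos hST]
          have h1 : ∏ i ∈ S, (if i ∈ S then (if i ∈ T then σ else 0)
                else (if i ∈ T then r else 1)) = σ ^ S.card := by
            rw [Finset.prod_congr rfl fun i hi => by
              rw [if_pos hi, if_pos (hST hi)]]
            exact Finset.prod_const σ
          have h2 : ∏ i ∈ Sᶜ, (if i ∈ S then (if i ∈ T then σ else 0)
                else (if i ∈ T then r else 1)) = r ^ (T.card - S.card) := by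
            rw [Finset.prod_congr rfl fun i hi => by
              rw [if_neg (Finset.mem_compl.mp hi)]]
            rw [← Finset.prod_filter]
            have : Sᶜ.filter (· ∈ T) = T \ S := by
              ext i; simp [Finset.mem_compl, Finset.mem_sdiff, and_comm]
            rw [this, Finset.prod_const r, Finset.card_sdiff_of_subset hST]
          rw [h1, h2]
        · rw [if_neg hST]
          obtain ⟨i, hiS, hiT⟩ := Finset.not_subset.mp hST
          rw [Finset.prod_eq_zero hiS (by rw [if_pos hiS, if_neg hiT]), zero_mul]

/-- For every `f : {-1,1}^n → ℝ`, `r ∈ (-1,1)`, and `1 ≤ s ≤ n`: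
`w_s(f,r) = (1-r²)^{s/2} · Σ_{t=s}^{n} C(t,s) · w_t(f,0) · r^{t-s}`. -/
theorem stmt4 {n : ℕ} (f : (Fin n → Bool) → ℝ) (r : ℝ) (hr : r ∈ Set.Ioo (-1 : ℝ) 1)
    (s : ℕ) (hs : 1 ≤ s) (hsn : s ≤ n) :
    levelWeight (fun _ => r) f s
      = (Real.sqrt (1 - r ^ 2)) ^ s
          * ∑ t ∈ Finset.Icc s n,
              (t.choose s : ℝ) * levelWeight (fun _ => (0 : ℝ)) f t * r ^ (t - s) := by
  set σ := Real.sqrt (1 - r ^ 2) with hσdef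
  set c : Finset (Fin n) → ℝ := fun T => biasedFourier (fun _ => (0:ℝ)) f T with hc
  calc levelWeight (fun _ => r) f s
      = ∑ S ∈ univ.filter (fun S : Finset (Fin n) => S.card = s),
          ∑ T : Finset (Fin n), c T *
            (if S ⊆ T then σ ^ S.card * r ^ (T.card - S.card) else 0) := by
        exact Finset.sum_congr rfl fun S _ => biasedFourier_eq f r hr S
    _ = ∑ T : Finset (Fin n), ∑ S ∈ univ.filter (fun S : Finset (Fin n) => S.card = s),
          c T * (if S ⊆ T then σ ^ S.card * r ^ (T.card - S.card) else 0) :=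
        Finset.sum_comm
    _ = ∑ T : Finset (Fin n), (T.card.choose s : ℝ) * c T * (σ ^ s * r ^ (T.card - s)) := by
        refine Finset.sum_congr rfl fun T _ => ?_
        calc ∑ S ∈ univ.filter (fun S : Finset (Fin n) => S.card = s),
              c T * (if S ⊆ T then σ ^ S.card * r ^ (T.card - S.card) else 0)
            = ∑ S ∈ univ.filter (fun S : Finset (Fin n) => S.card = s),
                (if S ⊆ T then c T * (σ ^ s * r ^ (T.card - s)) else 0) := by
              refine Finset.sum_congr rfl fun S hS => ?_
              rw [(Finset.mem_filter.mp hS).2, mul_ite, mul_zero]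
          _ = ∑ S ∈ (univ.filter (fun S : Finset (Fin n) => S.card = s)).filter
                (fun S => S ⊆ T), c T * (σ ^ s * r ^ (T.card - s)) :=
              (Finset.sum_filter _ _).symm
          _ = ∑ S ∈ T.powersetCard s, c T * (σ ^ s * r ^ (T.card - s)) := by
              congr 1
              ext S
              simp [Finset.mem_powersetCard, and_comm]
          _ = _ := by
              rw [Finset.sum_const, Finset.card_powersetCard, nsmul_eq_mul]
              ring
    _ = ∑ t ∈ Finset.range (n + 1), ∑ T ∈ univ.filter (fun T : Finset (Fin n) => T.card = t),
          (T.card.choose s : ℝ) * c T * (σ ^ s * r ^ (T.card - s)) :=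
        (Finset.sum_fiberwise_of_maps_to
          (fun T _ => Finset.mem_range.mpr (Nat.lt_succ_of_le (by simpa using Finset.card_le_univ T)))
          _).symm
    _ = ∑ t ∈ Finset.range (n + 1),
          (t.choose s : ℝ) * levelWeight (fun _ => (0:ℝ)) f t * (σ ^ s * r ^ (t - s)) := by
        refine Finset.sum_congr rfl fun t _ => ?_
        have hcong : ∀ T ∈ univ.filter (fun T : Finset (Fin n) => T.card = t),
            (T.card.choose s : ℝ) * c T * (σ ^ s * r ^ (T.card - s))
            = (t.choose s : ℝ) * (σ ^ s * r ^ (t - s)) * c T := by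
          intro T hT; rw [(Finset.mem_filter.mp hT).2]; ring
        rw [Finset.sum_congr rfl hcong, ← Finset.mul_sum]
        have hlw : levelWeight (fun _ => (0:ℝ)) f t
            = ∑ T ∈ univ.filter (fun T : Finset (Fin n) => T.card = t), c T := rfl
        rw [hlw]; ring
    _ = ∑ t ∈ Finset.Icc s n,
          (t.choose s : ℝ) * levelWeight (fun _ => (0:ℝ)) f t * (σ ^ s * r ^ (t - s)) := by
        refine (Finset.sum_subset (fun t ht => Finset.mem_range.mpr
          (Nat.lt_succ_of_le (Finset.mem_Icc.mp ht).2)) fun t ht hnot => ?_).symm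
        have htn : t ≤ n := Nat.lt_succ_iff.mp (Finset.mem_range.mp ht)
        have hts : t < s := by
          by_contra h
          exact hnot (Finset.mem_Icc.mpr ⟨le_of_not_gt h, htn⟩)
        rw [Nat.choose_eq_zero_of_lt hts]
        simp
    _ = _ := by
        rw [Finset.mul_sum]
        exact Finset.sum_congr rfl fun t _ => by ring
end
end

section
/- Let g ∈ ℝ[t_1,…,t_n] be a multilinear polynomial (every variable occurs with exponent at most one) and define h ∈ ℝ[t] by h(t) = g(t,…,t). Then for every k and every t ∈ ℝ: d^k/dt^k h(t) = k! · Σ_{S⊆[n], |S|=k} (∂^k/∂t_S) g(t,…,t), where ∂^k/∂t_S denotes the partial derivative taken once in each variable t_i with i ∈ S. -/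
open Finset

noncomputable section

/-- The iterated partial derivative of a multivariate polynomial, taken once in each
variable indexed by `S` (applied in increasing order of indices; partial derivatives
commute, so the order is immaterial). -/
def pderivFinset {n : ℕ} (S : Finset (Fin n)) (g : MvPolynomial (Fin n) ℝ) :
    MvPolynomial (Fin n) ℝ :=
  (S.sort (· ≤ ·)).foldl (fun p i => MvPolynomial.pderiv i p) g

namespace Stmt7Aux

open MvPolynomial Polynomial

/-- The 0/1 exponent vector with support `A`. -/
def mset {n : ℕ} (A : Finset (Fin n)) : Fin n →₀ ℕ :=
  ∑ i ∈ A, Finsupp.single i 1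

lemma mset_apply {n : ℕ} (A : Finset (Fin n)) (i : Fin n) :
    mset A i = if i ∈ A then 1 else 0 := by
  classical
  simp [mset, Finsupp.finset_sum_apply, Finsupp.single_apply, Finset.sum_ite_eq' A i (fun _ => 1)]

lemma mset_eq_of_le_one {n : ℕ} (m : Fin n →₀ ℕ) (h : ∀ i, m i ≤ 1) :
    m = mset m.support := by
  ext i
  rw [mset_apply]
  by_cases hi : i ∈ m.support
  · simp only [hi, if_true]
    have h0 : m i ≠ 0 := Finsupp.mem_support_iff.mp hi
    have h1 := h i
    omega
  · simp only [hi, if_false]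
    simpa using Finsupp.notMem_support_iff.mp hi

lemma mset_sub_single {n : ℕ} (A : Finset (Fin n)) (i : Fin n) (hi : i ∈ A) :
    mset A - Finsupp.single i 1 = mset (A.erase i) := by
  classical
  ext j
  rw [Finsupp.tsub_apply, mset_apply, mset_apply, Finsupp.single_apply]
  by_cases hj : j = i
  · subst hj; simp [hi]
  · simp [hj, Ne.symm hj, Finset.mem_erase]

lemma mset_sum {n : ℕ} (A : Finset (Fin n)) : (mset A).sum (fun _ e => e) = A.card := by
  classical
  rw [Finsupp.sum]
  have hsupp : (mset A).support = A := by
    ext i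
    simp [Finsupp.mem_support_iff, mset_apply]
  rw [hsupp]
  simp [mset_apply, Finset.sum_ite_of_true]

lemma foldl_pderiv_zero {n : ℕ} (l : List (Fin n)) :
    l.foldl (fun p i => MvPolynomial.pderiv i p) (0 : MvPolynomial (Fin n) ℝ) = 0 := by
  induction l with
  | nil => rfl
  | cons i l ih => simpa using ih

lemma foldl_pderiv_add {n : ℕ} (l : List (Fin n)) (p q : MvPolynomial (Fin n) ℝ) :
    l.foldl (fun p i => MvPolynomial.pderiv i p) (p + q)
      = l.foldl (fun p i => MvPolynomial.pderiv i p) p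
        + l.foldl (fun p i => MvPolynomial.pderiv i p) q := by
  induction l generalizing p q with
  | nil => rfl
  | cons i l ih => simpa [map_add] using ih (MvPolynomial.pderiv i p) (MvPolynomial.pderiv i q)

lemma foldl_pderiv_monomial {n : ℕ} (l : List (Fin n)) (hnd : l.Nodup)
    (A : Finset (Fin n)) (c : ℝ) :
    l.foldl (fun p i => MvPolynomial.pderiv i p) (monomial (mset A) c)
      = if l.toFinset ⊆ A then monomial (mset (A \ l.toFinset)) c else 0 := by
  classical
  induction l generalizing A with
  | nil => simp
  | cons i l ih =>
    have hnd' : l.Nodup := hnd.of_cons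
    have hinotl : i ∉ l := (List.nodup_cons.mp hnd).1
    rw [List.foldl_cons]
    by_cases hiA : i ∈ A
    · have hstep : MvPolynomial.pderiv i (monomial (mset A) c)
          = monomial (mset (A.erase i)) c := by
        rw [MvPolynomial.pderiv_monomial, mset_apply, if_pos hiA, mset_sub_single A i hiA]
        norm_num
      rw [hstep, ih hnd' (A.erase i)]
      have hsub : l.toFinset ⊆ A.erase i ↔ (i :: l).toFinset ⊆ A := by
        constructor
        · intro h j hj
          rw [List.toFinset_cons, Finset.mem_insert] at hj
          rcases hj with rfl | hj
          · exact hiA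
          · exact (Finset.mem_erase.mp (h hj)).2
        · intro h j hj
          refine Finset.mem_erase.mpr ⟨?_, h (by simp [hj])⟩
          rintro rfl
          exact hinotl (List.mem_toFinset.mp hj)
      by_cases hc : (i :: l).toFinset ⊆ A
      · rw [if_pos (hsub.mpr hc), if_pos hc]
        congr 1
        have : A.erase i \ l.toFinset = A \ (i :: l).toFinset := by
          ext j
          simp only [Finset.mem_sdiff, Finset.mem_erase, List.toFinset_cons,
            Finset.mem_insert, List.mem_toFinset]
          tauto
        rw [this]
      · rw [if_neg (fun h => hc (hsub.mp h)), if_neg hc]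
    · have hstep : MvPolynomial.pderiv i (monomial (mset A) c)
          = 0 := by
        rw [MvPolynomial.pderiv_monomial, mset_apply, if_neg hiA]
        simp
      rw [hstep, foldl_pderiv_zero]
      have : ¬ (i :: l).toFinset ⊆ A := fun h => hiA (h (by simp))
      rw [if_neg this]

lemma pderivFinset_monomial {n : ℕ} (S A : Finset (Fin n)) (c : ℝ) :
    pderivFinset S (monomial (mset A) c)
      = if S ⊆ A then monomial (mset (A \ S)) c else 0 := by
  classical
  have h1 : (S.sort (· ≤ ·)).toFinset = S := S.sort_toFinset _
  have h2 : (S.sort (· ≤ ·)).Nodup := S.sort_nodup _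
  rw [pderivFinset, foldl_pderiv_monomial _ h2 A c, h1]

lemma pderivFinset_add {n : ℕ} (S : Finset (Fin n)) (p q : MvPolynomial (Fin n) ℝ) :
    pderivFinset S (p + q) = pderivFinset S p + pderivFinset S q :=
  foldl_pderiv_add _ p q

lemma pderivFinset_sum {n : ℕ} (S : Finset (Fin n)) {ι : Type*} (s : Finset ι)
    (f : ι → MvPolynomial (Fin n) ℝ) :
    pderivFinset S (∑ i ∈ s, f i) = ∑ i ∈ s, pderivFinset S (f i) := by
  classical
  induction s using Finset.induction_on with
  | empty => simpa [pderivFinset] using foldl_pderiv_zero (S.sort (· ≤ ·))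
  | insert _ _ h ih => rw [Finset.sum_insert h, Finset.sum_insert h, pderivFinset_add, ih]

/-- Evaluating the "diagonal" one-variable polynomial. -/
lemma eval_diag {n : ℕ} (g : MvPolynomial (Fin n) ℝ) (u : ℝ) :
    Polynomial.eval u (MvPolynomial.aeval (fun _ : Fin n => Polynomial.X) g)
      = MvPolynomial.eval (fun _ : Fin n => u) g := by
  induction g using MvPolynomial.induction_on with
  | C a => simp
  | add p q hp hq => simp [hp, hq]
  | mul_X p i hp => simp [hp]

lemma aeval_diag_monomial {n : ℕ} (m : Fin n →₀ ℕ) (c : ℝ) :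
    MvPolynomial.aeval (fun _ : Fin n => Polynomial.X) (monomial m c)
      = Polynomial.C c * Polynomial.X ^ (m.sum fun _ e => e) := by
  classical
  rw [MvPolynomial.aeval_monomial, Polynomial.algebraMap_eq]
  congr 1
  rw [Finsupp.prod, Finsupp.sum]
  exact Finset.prod_pow_eq_pow_sum _ _ _

lemma iteratedDeriv_polyEval (p : Polynomial ℝ) (k : ℕ) (t : ℝ) :
    iteratedDeriv k (fun u : ℝ => Polynomial.eval u p) t
      = Polynomial.eval t (Polynomial.derivative^[k] p) := by
  induction k generalizing t with
  | zero => simp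
  | succ k ih =>
    rw [iteratedDeriv_succ]
    have : iteratedDeriv k (fun u : ℝ => Polynomial.eval u p)
        = fun t => Polynomial.eval t (Polynomial.derivative^[k] p) := funext ih
    rw [this, Function.iterate_succ_apply']
    exact Polynomial.deriv _

/-- Key polynomial identity for a single multilinear monomial. -/
lemma key_monomial {n : ℕ} (A : Finset (Fin n)) (c : ℝ) (k : ℕ) :
    Polynomial.derivative^[k]
        (MvPolynomial.aeval (fun _ : Fin n => Polynomial.X) (monomial (mset A) c))
      = Polynomial.C (k.factorial : ℝ)
          * ∑ S ∈ univ.filter (fun S : Finset (Fin n) => S.card = k),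
              MvPolynomial.aeval (fun _ : Fin n => Polynomial.X)
                (pderivFinset S (monomial (mset A) c)) := by
  classical
  rw [aeval_diag_monomial, mset_sum]
  -- LHS
  rw [Polynomial.iterate_derivative_C_mul, Polynomial.iterate_derivative_X_pow_eq_C_mul]
  -- RHS: each term
  have hterm : ∀ S ∈ univ.filter (fun S : Finset (Fin n) => S.card = k),
      MvPolynomial.aeval (fun _ : Fin n => Polynomial.X)
          (pderivFinset S (monomial (mset A) c))
        = if S ∈ A.powersetCard k then Polynomial.C c * Polynomial.X ^ (A.card - k) else 0 := by
    intro S hS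
    rw [Finset.mem_filter] at hS
    rw [pderivFinset_monomial]
    by_cases hSA : S ⊆ A
    · rw [if_pos hSA, if_pos (Finset.mem_powersetCard.mpr ⟨hSA, hS.2⟩)]
      rw [aeval_diag_monomial, mset_sum, Finset.card_sdiff_of_subset hSA, hS.2]
    · rw [if_neg hSA, if_neg (fun h => hSA (Finset.mem_powersetCard.mp h).1), map_zero]
  rw [Finset.sum_congr rfl hterm]
  have hsubset : A.powersetCard k ⊆ univ.filter (fun S : Finset (Fin n) => S.card = k) := by
    intro S hS
    exact Finset.mem_filter.mpr ⟨Finset.mem_univ S, (Finset.mem_powersetCard.mp hS).2⟩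
  rw [Finset.sum_ite_mem, Finset.inter_eq_right.mpr hsubset, Finset.sum_const,
    Finset.card_powersetCard]
  rw [nsmul_eq_mul, Nat.descFactorial_eq_factorial_mul_choose]
  simp only [Nat.cast_mul, map_mul, ← Polynomial.C_eq_natCast]
  ring

lemma key {n : ℕ} (g : MvPolynomial (Fin n) ℝ)
    (hml : ∀ m ∈ g.support, ∀ i, m i ≤ 1) (k : ℕ) :
    Polynomial.derivative^[k]
        (MvPolynomial.aeval (fun _ : Fin n => Polynomial.X) g)
      = Polynomial.C (k.factorial : ℝ)
          * ∑ S ∈ univ.filter (fun S : Finset (Fin n) => S.card = k),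
              MvPolynomial.aeval (fun _ : Fin n => Polynomial.X) (pderivFinset S g) := by
  classical
  conv_lhs => rw [(MvPolynomial.support_sum_monomial_coeff g).symm]
  have hiter_sum : ∀ {ι : Type} (s : Finset ι) (f : ι → Polynomial ℝ),
      Polynomial.derivative^[k] (∑ i ∈ s, f i) = ∑ i ∈ s, Polynomial.derivative^[k] (f i) := by
    intro ι s f
    simp only [← Module.End.pow_apply]
    exact map_sum _ _ _
  rw [map_sum, hiter_sum]
  have hstep : ∀ m ∈ g.support,
      Polynomial.derivative^[k]
          (MvPolynomial.aeval (fun _ : Fin n => Polynomial.X)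
            (monomial m (MvPolynomial.coeff m g)))
        = Polynomial.C (k.factorial : ℝ)
            * ∑ S ∈ univ.filter (fun S : Finset (Fin n) => S.card = k),
                MvPolynomial.aeval (fun _ : Fin n => Polynomial.X)
                  (pderivFinset S (monomial m (MvPolynomial.coeff m g))) := by
    intro m hm
    have h := key_monomial m.support (MvPolynomial.coeff m g) k
    rw [← mset_eq_of_le_one m (hml m hm)] at h
    exact h
  rw [Finset.sum_congr rfl hstep, ← Finset.mul_sum, Finset.sum_comm]
  congr 1
  refine Finset.sum_congr rfl fun S _ => ?_
  rw [← map_sum, ← pderivFinset_sum, MvPolynomial.support_sum_monomial_coeff g]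

end Stmt7Aux

/-- If `g ∈ ℝ[t_1,…,t_n]` is multilinear and `h(t) = g(t,…,t)`, then
`d^k/dt^k h(t) = k! · Σ_{|S| = k} (∂^k/∂t_S g)(t,…,t)`. -/
theorem stmt7 {n : ℕ} (g : MvPolynomial (Fin n) ℝ)
    (hml : ∀ m ∈ g.support, ∀ i, m i ≤ 1) (k : ℕ) (t : ℝ) :
    iteratedDeriv k (fun u : ℝ => MvPolynomial.eval (fun _ : Fin n => u) g) t
      = (k.factorial : ℝ)
          * ∑ S ∈ univ.filter (fun S : Finset (Fin n) => S.card = k),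
              MvPolynomial.eval (fun _ : Fin n => t) (pderivFinset S g) := by
  have hfun : (fun u : ℝ => MvPolynomial.eval (fun _ : Fin n => u) g)
      = fun u : ℝ =>
          Polynomial.eval u (MvPolynomial.aeval (fun _ : Fin n => Polynomial.X) g) :=
    funext fun u => (Stmt7Aux.eval_diag g u).symm
  rw [hfun, Stmt7Aux.iteratedDeriv_polyEval, Stmt7Aux.key g hml k]
  rw [Polynomial.eval_mul, Polynomial.eval_C, Polynomial.eval_finset_sum]
  congr 1
  exact Finset.sum_congr rfl fun S _ => Stmt7Aux.eval_diag (pderivFinset S g) t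
end
end

section
/- Let f : {−1,1}^n → {−1,1} be non-constant. Then the set {r⃗ ∈ (−1,1)^n : f̂({i}, r⃗) = 0 for all i ∈ [n]} has n-dimensional Lebesgue measure zero. -/
open Finset

noncomputable section

open MeasureTheory in

lemma aux_poly_null : ∀ {n : ℕ} (p : MvPolynomial (Fin n) ℝ), p ≠ 0 →
    volume {r : Fin n → ℝ | MvPolynomial.eval r p = 0} = 0 := by
  intro n
  induction n with
  | zero =>
    intro p hp
    obtain ⟨c, rfl⟩ := MvPolynomial.C_surjective (Fin 0) p
    have hc : c ≠ 0 := fun h => hp (by simp [h])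
    convert measure_empty
    · ext r; simp [hc]
    · infer_instance
  | succ n ih =>
    intro p hp
    set q := MvPolynomial.finSuccEquiv ℝ n p with hq
    have hq0 : q ≠ 0 := by
      simpa [hq] using (EmbeddingLike.map_ne_zero_iff (f := (MvPolynomial.finSuccEquiv ℝ n))).mpr hp
    have hc0 : q.leadingCoeff ≠ 0 := Polynomial.leadingCoeff_ne_zero.mpr hq0
    set W : Set ((Fin n → ℝ) × ℝ) :=
      {sy | MvPolynomial.eval (Fin.cons sy.2 sy.1) p = 0} with hW
    have hWm : MeasurableSet W := by
      have hcont : Continuous fun sy : (Fin n → ℝ) × ℝ =>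
          MvPolynomial.eval (Fin.cons sy.2 sy.1) p := by
        apply (MvPolynomial.continuous_eval p).comp
        refine continuous_pi fun i => ?_
        refine Fin.cases ?_ ?_ i
        · exact continuous_snd
        · intro j; exact (continuous_apply j).comp continuous_fst
      exact hcont.measurable (measurableSet_singleton 0)
    have hae : ∀ᵐ s : (Fin n → ℝ), volume (Prod.mk s ⁻¹' W) = 0 := by
      have h1 : ∀ᵐ s : (Fin n → ℝ), MvPolynomial.eval s q.leadingCoeff ≠ 0 := by
        rw [MeasureTheory.ae_iff]
        simpa using ih q.leadingCoeff hc0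
      filter_upwards [h1] with s hs
      have hps : q.map (MvPolynomial.eval s) ≠ 0 := by
        intro h
        apply hs
        have h2 := congrArg (fun P => Polynomial.coeff P q.natDegree) h
        simp only [Polynomial.coeff_map, Polynomial.coeff_zero] at h2
        rw [Polynomial.leadingCoeff]
        exact h2
      refine measure_mono_null ?_
        ((Polynomial.finite_setOf_isRoot hps).measure_zero _)
      intro y hy
      have h3 : MvPolynomial.eval (Fin.cons y s) p = 0 := hy
      rw [MvPolynomial.eval_eq_eval_mv_eval'] at h3
      exact h3
    have hWnull : ((volume : Measure (Fin n → ℝ)).prod volume) W = 0 :=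
      (Measure.measure_prod_null hWm).mpr hae
    set e := MeasurableEquiv.piFinSuccAbove (fun _ : Fin (n + 1) => ℝ) 0 with he
    have h1 := MeasureTheory.volume_preserving_piFinSuccAbove (fun _ : Fin (n + 1) => ℝ) 0
    have hmp : MeasurePreserving (Prod.swap ∘ e) volume
        ((volume : Measure (Fin n → ℝ)).prod volume) := by
      refine MeasurePreserving.comp ?_ h1
      rw [Measure.volume_eq_prod]
      exact Measure.measurePreserving_swap
    have hset : {r : Fin (n + 1) → ℝ | MvPolynomial.eval r p = 0} = (Prod.swap ∘ e) ⁻¹' W := by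
      ext r
      have hr : (Fin.cons (r 0) (Fin.removeNth 0 r) : Fin (n + 1) → ℝ) = r := by
        rw [Fin.removeNth_zero, Fin.cons_self_tail]
      simp only [Set.mem_setOf_eq, Set.mem_preimage, Function.comp_apply, hW, he,
        MeasurableEquiv.piFinSuccAbove_apply, Prod.swap_prod_mk, Fin.insertNthEquiv_symm_apply]
      rw [hr]
    rw [hset, hmp.measure_preimage hWm.nullMeasurableSet]
    exact hWnull


lemma aux_edge {n : ℕ} (f : (Fin n → Bool) → ℝ) (hnc : ∃ x y, f x ≠ f y) :
    ∃ (i : Fin n) (z : Fin n → Bool),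
      f (Function.update z i true) ≠ f (Function.update z i false) := by
  by_contra h
  push_neg at h
  have key : ∀ s : Finset (Fin n), ∀ x y : Fin n → Bool,
      (∀ i, i ∉ s → x i = y i) → f x = f y := by
    intro s
    induction s using Finset.induction with
    | empty =>
      intro x y hxy
      have : x = y := funext fun i => hxy i (by simp)
      rw [this]
    | @insert i s hi ih =>
      intro x y hxy
      have h1 : f x = f (Function.update y i (x i)) := by
        apply ih
        intro j hj
        by_cases hji : j = i
        · subst hji; simp
        · rw [Function.update_of_ne hji]
          exact hxy j (by simp [hji, hj])
      have h2 : f (Function.update y i (x i)) = f y := by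
        conv_rhs => rw [← Function.update_eq_self i y]
        cases x i <;> cases y i
        · rfl
        · exact (h i y).symm
        · exact h i y
        · rfl
      rw [h1, h2]
  obtain ⟨x, y, hxy⟩ := hnc
  exact hxy (key univ x y (fun i hi => absurd (mem_univ i) hi))

open MvPolynomial in
def auxP {n : ℕ} (f : (Fin n → Bool) → ℝ) (i : Fin n) : MvPolynomial (Fin n) ℝ :=
  ∑ x : Fin n → Bool,
    (∏ j, (C ((1:ℝ)/2) * (1 + C (pmVal (x j)) * X j))) * C (f x) * (C (pmVal (x i)) - X i)

lemma aux_eval {n : ℕ} (f : (Fin n → Bool) → ℝ) (i : Fin n) (r : Fin n → ℝ) :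
    MvPolynomial.eval r (auxP f i) =
      ∑ x : Fin n → Bool, cubeWt r x * f x * (pmVal (x i) - r i) := by
  simp only [auxP, map_sum, map_mul, map_prod, map_add, map_sub, map_one,
    MvPolynomial.eval_C, MvPolynomial.eval_X, cubeWt]
  refine Finset.sum_congr rfl fun x _ => ?_
  congr 1
  congr 1
  exact Finset.prod_congr rfl fun j _ => by ring

lemma pmVal_mul_self (b : Bool) : pmVal b * pmVal b = 1 := by cases b <;> simp [pmVal]

lemma aux_ne_zero {n : ℕ} (f : (Fin n → Bool) → ℝ) (i : Fin n) (z : Fin n → Bool)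
    (hedge : f (Function.update z i true) ≠ f (Function.update z i false)) :
    auxP f i ≠ 0 := by
  set a := Function.update z i true with ha
  set b := Function.update z i false with hb
  set r : Fin n → ℝ := fun j => if j = i then 0 else pmVal (z j) with hr
  intro h0
  have hval := aux_eval f i r
  rw [h0, map_zero] at hval
  set w : (Fin n → Bool) → ℝ := fun x => cubeWt r x * f x * (pmVal (x i) - r i) with hw
  have hab : a ≠ b := by
    intro h
    have := congrFun h i
    simp [ha, hb] at this
  have hzero : ∀ x : Fin n → Bool, x ∉ ({a, b} : Finset (Fin n → Bool)) → w x = 0 := by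
    intro x hx
    have hj : ∃ j, j ≠ i ∧ x j ≠ z j := by
      by_contra hc
      push_neg at hc
      apply hx
      have hxu : x = Function.update z i (x i) := by
        funext j
        by_cases hji : j = i
        · subst hji; simp
        · rw [Function.update_of_ne hji]; exact hc j hji
      rcases Bool.dichotomy (x i) with h | h <;> rw [h] at hxu <;>
        simp [hxu, ha, hb]
    obtain ⟨j, hji, hxz⟩ := hj
    have hfac : (1 + r j * pmVal (x j)) / 2 = 0 := by
      rw [hr]
      simp only [if_neg hji]
      have : pmVal (z j) * pmVal (x j) = -1 := by
        cases hzj : z j <;> cases hxj : x j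
        · exact absurd (hxj.trans hzj.symm) hxz
        · norm_num [pmVal]
        · norm_num [pmVal]
        · exact absurd (hxj.trans hzj.symm) hxz
      rw [this]; ring
    have : cubeWt r x = 0 := Finset.prod_eq_zero (mem_univ j) hfac
    simp [hw, this]
  have hcube : ∀ x : Fin n → Bool, (∀ j, j ≠ i → x j = z j) → cubeWt r x = 1 / 2 := by
    intro x hx
    rw [cubeWt]
    rw [Fintype.prod_eq_single i]
    · simp [hr]
    · intro j hj
      rw [hr]
      simp only [if_neg hj]
      rw [hx j hj, pmVal_mul_self]
      norm_num
  have hsum : ∑ x : Fin n → Bool, w x = (f a - f b) / 2 := by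
    rw [← Finset.sum_subset (Finset.subset_univ ({a, b} : Finset (Fin n → Bool)))
      (fun x _ hx => hzero x hx)]
    rw [Finset.sum_pair hab]
    have hca : cubeWt r a = 1 / 2 := hcube a fun j hj => by rw [ha, Function.update_of_ne hj]
    have hcb : cubeWt r b = 1 / 2 := hcube b fun j hj => by rw [hb, Function.update_of_ne hj]
    have hai : a i = true := by simp [ha]
    have hbi : b i = false := by simp [hb]
    have hri : r i = 0 := by simp [hr]
    simp only [hw, hca, hcb, hai, hbi, hri, pmVal]
    norm_num
    ring
  rw [hsum] at hval
  exact hedge (sub_eq_zero.mp (by linarith))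

/-- For a non-constant `f : {-1,1}^n → {-1,1}`, the set of bias
vectors `r⃗ ∈ (-1,1)^n` at which all first-level Fourier coefficients vanish has
`n`-dimensional Lebesgue measure zero. -/
theorem stmt17 {n : ℕ} (f : (Fin n → Bool) → ℝ)
    (hpm : ∀ x, f x = 1 ∨ f x = -1)
    (hnc : ∃ x y, f x ≠ f y) :
    MeasureTheory.volume
      {r : Fin n → ℝ | (∀ i, r i ∈ Set.Ioo (-1 : ℝ) 1) ∧
        ∀ i : Fin n, biasedFourier r f {i} = 0} = 0 := by
  obtain ⟨i, z, hedge⟩ := aux_edge f hnc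
  have hP : auxP f i ≠ 0 := aux_ne_zero f i z hedge
  refine MeasureTheory.measure_mono_null ?_ (aux_poly_null (auxP f i) hP)
  intro r hr
  obtain ⟨hr1, hr2⟩ := hr
  have hs : 0 < Real.sqrt (1 - r i ^ 2) := by
    have h := hr1 i
    apply Real.sqrt_pos.mpr
    nlinarith [h.1, h.2]
  show MvPolynomial.eval r (auxP f i) = 0
  have hbf : biasedFourier r f {i} =
      (∑ x : Fin n → Bool, cubeWt r x * f x * (pmVal (x i) - r i)) / Real.sqrt (1 - r i ^ 2) := by
    rw [biasedFourier, biasedExp, Finset.sum_div]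
    refine Finset.sum_congr rfl fun x _ => ?_
    rw [biasedChi, Finset.prod_singleton]
    ring
  rw [aux_eval]
  have h2 := hr2 i
  rw [hbf, div_eq_zero_iff] at h2
  rcases h2 with h2 | h2
  · exact h2
  · exact absurd h2 (ne_of_gt hs)
end
end
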